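/- Let R₀¹ < R₀², δ¹, δ² > 0, λ¹, λ² > 0, γʲ = λʲ/δʲ, and let ρ¹(r) = C (r − R₀¹)^{γ¹−1}(R₀² − r)^{γ²} and ρ²(r) = C (δ¹/δ²)(r − R₀¹)^{γ¹}(R₀² − r)^{γ²−1} with C > 0 the constant such that ∫_{R₀¹}^{R₀²} (ρ¹ + ρ²) dr = 1. Let f_w¹, f_w² be Monod functions. Then the invasion rate Λ_w⁰ := ∫_{R₀¹}^{R₀²} (f_w¹(r) − δ¹) ρ¹(r) dr + ∫_{R₀¹}^{R₀²} (f_w²(r) − δ²) ρ²(r) dr satisfies Λ_w⁰ = ((γ¹ + γ²)/(λ¹ + λ²)) · E[Φ(B)], where B is a Beta(γ¹, γ²) random variable and Φ(x) = δ²(1 − x)(f_w¹((R₀² − R₀¹)x + R₀¹) − δ¹) + δ¹ x (f_w²((R₀² − R₀¹)x + R₀¹) − δ²). -/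

import Mathlib

open MeasureTheory intervalIntegral

/-- Monod consumption function `f(R) = aR/(b+R)`. -/
noncomputable def monod (a b r : ℝ) : ℝ := a * r / (b + r)

/-- Density on state 1 of the invariant measure. -/
noncomputable def rho1 (C R01 R02 γ1 γ2 r : ℝ) : ℝ :=
  C * (r - R01) ^ (γ1 - 1) * (R02 - r) ^ γ2

/-- Density on state 2 of the invariant measure. -/
noncomputable def rho2 (C δ1 δ2 R01 R02 γ1 γ2 r : ℝ) : ℝ :=
  C * (δ1 / δ2) * (r - R01) ^ γ1 * (R02 - r) ^ (γ2 - 1)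

/-- `Φ(x) = δ²(1−x)(f¹((R₀²−R₀¹)x+R₀¹)−δ¹) + δ¹x(f²((R₀²−R₀¹)x+R₀¹)−δ²)`. -/
noncomputable def Phi (a1 b1 a2 b2 δ1 δ2 R01 R02 x : ℝ) : ℝ :=
  δ2 * (1 - x) * (monod a1 b1 ((R02 - R01) * x + R01) - δ1)
    + δ1 * x * (monod a2 b2 ((R02 - R01) * x + R01) - δ2)

lemma mul_self_rpow {t s : ℝ} (ht : 0 ≤ t) (hs : s ≠ 0) : t * t ^ (s - 1) = t ^ s := by
  rcases eq_or_lt_of_le ht with h | h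
  · rw [← h, Real.zero_rpow hs, zero_mul]
  · rw [show t * t ^ (s-1) = t ^ (1:ℝ) * t ^ (s-1) by rw [Real.rpow_one],
      ← Real.rpow_add h]; ring_nf

lemma aux_int {p q : ℝ} (hp : -1 < p) (hq : -1 < q) {g : ℝ → ℝ}
    (hg : ContinuousOn g (Set.Icc 0 1)) :
    IntervalIntegrable (fun x => g x * (x ^ p * (1 - x) ^ q)) volume 0 1 := by
  have h1 : IntervalIntegrable (fun x => g x * (x ^ p * (1 - x) ^ q)) volume 0 (1/2) := by
    have hx : IntervalIntegrable (fun x : ℝ => x ^ p) volume 0 (1/2) :=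
      intervalIntegrable_rpow' hp
    have hcont : ContinuousOn (fun x => g x * (1 - x) ^ q) (Set.uIcc 0 (1/2)) := by
      rw [Set.uIcc_of_le (by norm_num)]
      apply ContinuousOn.mul
      · exact hg.mono (Set.Icc_subset_Icc le_rfl (by norm_num))
      · apply ContinuousOn.rpow_const (by fun_prop)
        intro x hx
        left
        have := hx.2
        intro h; rw [sub_eq_zero] at h; simp_all; linarith
    have h := hx.mul_continuousOn hcont
    have heq : (fun x => x ^ p * (g x * (1 - x) ^ q))
        = fun x : ℝ => g x * (x ^ p * (1 - x) ^ q) := by funext x; ring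
    rwa [heq] at h
  have h2 : IntervalIntegrable (fun x => g x * (x ^ p * (1 - x) ^ q)) volume (1/2) 1 := by
    have hx : IntervalIntegrable (fun x : ℝ => (1 - x) ^ q) volume (1/2) 1 := by
      have := (intervalIntegrable_rpow' hq (a := 1/2) (b := 0)).comp_sub_left 1
      norm_num at this; exact this
    have hcont : ContinuousOn (fun x => g x * x ^ p) (Set.uIcc (1/2) 1) := by
      rw [Set.uIcc_of_le (by norm_num)]
      apply ContinuousOn.mul
      · exact hg.mono (Set.Icc_subset_Icc (by norm_num) le_rfl)
      · apply ContinuousOn.rpow_const (by fun_prop)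
        intro x hx
        left; have := hx.1; intro h; rw [h] at this; norm_num at this
    have h := hx.mul_continuousOn hcont
    have heq : (fun x => (1 - x) ^ q * (g x * x ^ p))
        = fun x : ℝ => g x * (x ^ p * (1 - x) ^ q) := by funext x; ring
    rwa [heq] at h
  exact h1.trans h2

lemma monod_contOn {a b Δ R01 δ : ℝ} (hb : 0 < b) (hΔ : 0 ≤ Δ) (hR : 0 < R01) :
    ContinuousOn (fun x => monod a b (Δ * x + R01) - δ) (Set.Icc 0 1) := by
  apply ContinuousOn.sub _ continuousOn_const
  unfold monod
  apply ContinuousOn.div (by fun_prop) (by fun_prop)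
  intro x hx
  have h0 : 0 ≤ Δ * x := mul_nonneg hΔ hx.1
  exact ne_of_gt (by nlinarith)

lemma final_algebra (γ1 γ2 δ1 δ2 l1 l2 CK A B D I1 I2 : ℝ)
    (hδ1 : δ1 ≠ 0) (hδ2 : δ2 ≠ 0) (hll : l1 + l2 ≠ 0) (hD : D ≠ 0)
    (e1 : δ1 * γ1 = l1) (e2 : δ2 * γ2 = l2)
    (h3 : CK * (A + δ1 / δ2 * B) = 1)
    (hA : (γ1 + γ2) * A = γ2 * D) (hB : (γ1 + γ2) * B = γ1 * D) :
    CK * I1 + CK * (δ1 / δ2) * I2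
      = ((γ1 + γ2) / (l1 + l2)) * ((δ2 * I1 + δ1 * I2) / D) := by
  have h3η : CK * (A * δ2 + δ1 * B) = δ2 := by field_simp at h3; linarith [h3]
  have hCK : CK * D * (l1 + l2) = δ2 * (γ1 + γ2) := by
    linear_combination (γ1 + γ2) * h3η - CK * δ2 * hA - CK * δ1 * hB +
      (- CK * D * e1) - CK * D * e2
  field_simp
  linear_combination (δ2 * I1 + δ1 * I2) * hCK

/-- The invasion rate `Λ_w⁰` equals `((γ¹+γ²)/(λ¹+λ²)) E[Φ(B)]`, `B ∼ Beta(γ¹,γ²)`. -/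
theorem stmt7 (R01 R02 δ1 δ2 l1 l2 C a1 b1 a2 b2 : ℝ)
    (hR01 : 0 < R01) (hR : R01 < R02) (hδ1 : 0 < δ1) (hδ2 : 0 < δ2)
    (hl1 : 0 < l1) (hl2 : 0 < l2) (hC : 0 < C)
    (ha1 : 0 < a1) (hb1 : 0 < b1) (ha2 : 0 < a2) (hb2 : 0 < b2)
    -- `C` is the normalizing constant
    (hnorm : ∫ r in R01..R02,
        (rho1 C R01 R02 (l1 / δ1) (l2 / δ2) r
          + rho2 C δ1 δ2 R01 R02 (l1 / δ1) (l2 / δ2) r) = 1) :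
    (∫ r in R01..R02,
        (monod a1 b1 r - δ1) * rho1 C R01 R02 (l1 / δ1) (l2 / δ2) r)
      + (∫ r in R01..R02,
        (monod a2 b2 r - δ2) * rho2 C δ1 δ2 R01 R02 (l1 / δ1) (l2 / δ2) r)
    = ((l1 / δ1 + l2 / δ2) / (l1 + l2)) *
      ((∫ x in (0:ℝ)..1, Phi a1 b1 a2 b2 δ1 δ2 R01 R02 x
          * (x ^ (l1 / δ1 - 1) * (1 - x) ^ (l2 / δ2 - 1)))
        / (∫ x in (0:ℝ)..1, x ^ (l1 / δ1 - 1) * (1 - x) ^ (l2 / δ2 - 1))) := by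
  set γ1 := l1 / δ1 with hγ1def
  set γ2 := l2 / δ2 with hγ2def
  have hγ1 : 0 < γ1 := div_pos hl1 hδ1
  have hγ2 : 0 < γ2 := div_pos hl2 hδ2
  set Δ := R02 - R01 with hΔdef
  have hΔ : 0 < Δ := sub_pos.mpr hR
  have huIcc : Set.uIcc (0:ℝ) 1 = Set.Icc 0 1 := Set.uIcc_of_le zero_le_one
  -- substitution helper
  have hsub : ∀ g : ℝ → ℝ,
      (∫ r in R01..R02, g r) = Δ * ∫ x in (0:ℝ)..1, g (Δ * x + R01) := by
    intro g
    rw [intervalIntegral.integral_comp_mul_add g hΔ.ne' R01,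
      show Δ * 0 + R01 = R01 by ring, show Δ * 1 + R01 = R02 by rw [hΔdef]; ring,
      smul_eq_mul, ← mul_assoc, mul_inv_cancel₀ hΔ.ne', one_mul]
  -- continuity
  have hm1 : ContinuousOn (fun x => monod a1 b1 (Δ * x + R01) - δ1) (Set.Icc 0 1) :=
    monod_contOn hb1 hΔ.le hR01
  have hm2 : ContinuousOn (fun x => monod a2 b2 (Δ * x + R01) - δ2) (Set.Icc 0 1) :=
    monod_contOn hb2 hΔ.le hR01
  -- integrability
  have hJA : IntervalIntegrable (fun x : ℝ => x ^ (γ1-1) * (1-x) ^ γ2) volume 0 1 := by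
    have := aux_int (p := γ1-1) (q := γ2) (by linarith) (by linarith)
      (continuousOn_const (c := (1:ℝ)))
    simpa using this
  have hJB : IntervalIntegrable (fun x : ℝ => x ^ γ1 * (1-x) ^ (γ2-1)) volume 0 1 := by
    have := aux_int (p := γ1) (q := γ2-1) (by linarith) (by linarith)
      (continuousOn_const (c := (1:ℝ)))
    simpa using this
  have hJD : IntervalIntegrable (fun x : ℝ => x ^ (γ1-1) * (1-x) ^ (γ2-1)) volume 0 1 := by
    have := aux_int (p := γ1-1) (q := γ2-1) (by linarith) (by linarith)
      (continuousOn_const (c := (1:ℝ)))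
    simpa using this
  have hI1 : IntervalIntegrable
      (fun x => (monod a1 b1 (Δ*x+R01) - δ1) * (x ^ (γ1-1) * (1-x) ^ γ2)) volume 0 1 :=
    aux_int (by linarith) (by linarith) hm1
  have hI2 : IntervalIntegrable
      (fun x => (monod a2 b2 (Δ*x+R01) - δ2) * (x ^ γ1 * (1-x) ^ (γ2-1))) volume 0 1 :=
    aux_int (by linarith) (by linarith) hm2
  -- pointwise keys
  have key1 : ∀ x ∈ Set.Icc (0:ℝ) 1, x * x ^ (γ1-1) = x ^ γ1 :=
    fun x hx => mul_self_rpow hx.1 hγ1.ne'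
  have key2 : ∀ x ∈ Set.Icc (0:ℝ) 1, (1-x) * (1-x) ^ (γ2-1) = (1-x) ^ γ2 :=
    fun x hx => mul_self_rpow (by linarith [hx.2]) hγ2.ne'
  have hK1 : Δ * Δ ^ (γ1 - 1) = Δ ^ γ1 := mul_self_rpow hΔ.le hγ1.ne'
  have hK2 : Δ * Δ ^ (γ2 - 1) = Δ ^ γ2 := mul_self_rpow hΔ.le hγ2.ne'
  -- change of variables for LHS term 1
  have hL1 : (∫ r in R01..R02, (monod a1 b1 r - δ1) * rho1 C R01 R02 γ1 γ2 r)
      = (C * (Δ ^ γ1 * Δ ^ γ2)) *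
        ∫ x in (0:ℝ)..1, (monod a1 b1 (Δ*x+R01) - δ1) * (x ^ (γ1-1) * (1-x) ^ γ2) := by
    rw [hsub]
    have hcg : Set.EqOn
        (fun x => (monod a1 b1 (Δ*x+R01) - δ1) * rho1 C R01 R02 γ1 γ2 (Δ*x+R01))
        (fun x => (C * (Δ ^ (γ1-1) * Δ ^ γ2)) *
          ((monod a1 b1 (Δ*x+R01) - δ1) * (x ^ (γ1-1) * (1-x) ^ γ2)))
        (Set.uIcc 0 1) := by
      rw [huIcc]; intro x hx
      have h1 : Δ * x + R01 - R01 = Δ * x := by ring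
      have h2 : R02 - (Δ * x + R01) = Δ * (1 - x) := by rw [hΔdef]; ring
      simp only [rho1, h1, h2]
      rw [Real.mul_rpow hΔ.le hx.1, Real.mul_rpow hΔ.le (by linarith [hx.2] : (0:ℝ) ≤ 1 - x)]
      ring
    rw [intervalIntegral.integral_congr hcg, intervalIntegral.integral_const_mul]
    linear_combination (C * Δ ^ γ2 *
      (∫ x in (0:ℝ)..1, (monod a1 b1 (Δ*x+R01) - δ1) * (x ^ (γ1-1) * (1-x) ^ γ2))) * hK1
  -- change of variables for LHS term 2
  have hL2 : (∫ r in R01..R02, (monod a2 b2 r - δ2) * rho2 C δ1 δ2 R01 R02 γ1 γ2 r)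
      = (C * (Δ ^ γ1 * Δ ^ γ2)) * (δ1 / δ2) *
        ∫ x in (0:ℝ)..1, (monod a2 b2 (Δ*x+R01) - δ2) * (x ^ γ1 * (1-x) ^ (γ2-1)) := by
    rw [hsub]
    have hcg : Set.EqOn
        (fun x => (monod a2 b2 (Δ*x+R01) - δ2) * rho2 C δ1 δ2 R01 R02 γ1 γ2 (Δ*x+R01))
        (fun x => (C * (δ1 / δ2) * (Δ ^ γ1 * Δ ^ (γ2-1))) *
          ((monod a2 b2 (Δ*x+R01) - δ2) * (x ^ γ1 * (1-x) ^ (γ2-1))))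
        (Set.uIcc 0 1) := by
      rw [huIcc]; intro x hx
      have h1 : Δ * x + R01 - R01 = Δ * x := by ring
      have h2 : R02 - (Δ * x + R01) = Δ * (1 - x) := by rw [hΔdef]; ring
      simp only [rho2, h1, h2]
      rw [Real.mul_rpow hΔ.le hx.1, Real.mul_rpow hΔ.le (by linarith [hx.2] : (0:ℝ) ≤ 1 - x)]
      ring
    rw [intervalIntegral.integral_congr hcg, intervalIntegral.integral_const_mul]
    linear_combination (C * (δ1 / δ2) * Δ ^ γ1 *
      (∫ x in (0:ℝ)..1, (monod a2 b2 (Δ*x+R01) - δ2) * (x ^ γ1 * (1-x) ^ (γ2-1)))) * hK2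
  -- normalization
  have hnorm2 : (C * (Δ ^ γ1 * Δ ^ γ2)) *
      ((∫ x in (0:ℝ)..1, x ^ (γ1-1) * (1-x) ^ γ2)
        + δ1 / δ2 * (∫ x in (0:ℝ)..1, x ^ γ1 * (1-x) ^ (γ2-1))) = 1 := by
    rw [hsub] at hnorm
    have hcg : Set.EqOn
        (fun x => rho1 C R01 R02 γ1 γ2 (Δ*x+R01) + rho2 C δ1 δ2 R01 R02 γ1 γ2 (Δ*x+R01))
        (fun x => (C * (Δ ^ (γ1-1) * Δ ^ γ2)) * (x ^ (γ1-1) * (1-x) ^ γ2)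
          + (C * (δ1 / δ2) * (Δ ^ γ1 * Δ ^ (γ2-1))) * (x ^ γ1 * (1-x) ^ (γ2-1)))
        (Set.uIcc 0 1) := by
      rw [huIcc]; intro x hx
      have h1 : Δ * x + R01 - R01 = Δ * x := by ring
      have h2 : R02 - (Δ * x + R01) = Δ * (1 - x) := by rw [hΔdef]; ring
      simp only [rho1, rho2, h1, h2]
      have hlx : (0:ℝ) ≤ 1 - x := by linarith [hx.2]
      rw [Real.mul_rpow hΔ.le hx.1, Real.mul_rpow hΔ.le hx.1,
        Real.mul_rpow hΔ.le hlx, Real.mul_rpow hΔ.le hlx]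
      ring
    rw [intervalIntegral.integral_congr hcg,
      intervalIntegral.integral_add (hJA.const_mul _) (hJB.const_mul _),
      intervalIntegral.integral_const_mul, intervalIntegral.integral_const_mul] at hnorm
    linear_combination hnorm
      - (C * Δ ^ γ2 * (∫ x in (0:ℝ)..1, x ^ (γ1-1) * (1-x) ^ γ2)) * hK1
      - (C * (δ1 / δ2) * Δ ^ γ1 * (∫ x in (0:ℝ)..1, x ^ γ1 * (1-x) ^ (γ2-1))) * hK2
  -- A + B = D
  have hAB : (∫ x in (0:ℝ)..1, x ^ (γ1-1) * (1-x) ^ γ2)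
      + (∫ x in (0:ℝ)..1, x ^ γ1 * (1-x) ^ (γ2-1))
      = ∫ x in (0:ℝ)..1, x ^ (γ1-1) * (1-x) ^ (γ2-1) := by
    rw [← intervalIntegral.integral_add hJA hJB]
    apply intervalIntegral.integral_congr
    rw [huIcc]; intro x hx
    have k1 := key1 x hx
    have k2 := key2 x hx
    simp only
    linear_combination (-(x ^ (γ1-1))) * k2 + (-((1-x) ^ (γ2-1))) * k1
  -- FTC : γ1 * A = γ2 * B
  have hFTC : γ1 * (∫ x in (0:ℝ)..1, x ^ (γ1-1) * (1-x) ^ γ2)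
      = γ2 * (∫ x in (0:ℝ)..1, x ^ γ1 * (1-x) ^ (γ2-1)) := by
    have hcF : ContinuousOn (fun x : ℝ => x ^ γ1 * (1-x) ^ γ2) (Set.Icc 0 1) := by
      apply ContinuousOn.mul
      · intro x _
        exact (Real.continuousAt_rpow_const x γ1 (Or.inr hγ1.le)).continuousWithinAt
      · intro x _
        exact ((Real.continuousAt_rpow_const (1-x) γ2 (Or.inr hγ2.le)).comp
          ((continuous_const.sub continuous_id).continuousAt)).continuousWithinAt
    have hderiv : ∀ x ∈ Set.Ioo (0:ℝ) 1, HasDerivAt (fun y : ℝ => y ^ γ1 * (1-y) ^ γ2)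
        (γ1 * (x ^ (γ1-1) * (1-x) ^ γ2) - γ2 * (x ^ γ1 * (1-x) ^ (γ2-1))) x := by
      intro x hx
      have h1 : HasDerivAt (fun y : ℝ => y ^ γ1) (γ1 * x ^ (γ1-1)) x :=
        Real.hasDerivAt_rpow_const (Or.inl hx.1.ne')
      have hin : HasDerivAt (fun y : ℝ => 1 - y) (-1) x := by
        simpa using (hasDerivAt_id x).const_sub 1
      have hbase : HasDerivAt (fun t : ℝ => t ^ γ2) (γ2 * (1-x) ^ (γ2-1)) (1-x) :=
        Real.hasDerivAt_rpow_const (Or.inl (by linarith [hx.2] : (0:ℝ) < 1 - x).ne')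
      have h2 : HasDerivAt (fun y : ℝ => (1-y) ^ γ2) (γ2 * (1-x) ^ (γ2-1) * (-1)) x :=
        hbase.comp x hin
      have h := h1.mul h2
      exact h.congr_deriv (by ring)
    have hint : IntervalIntegrable
        (fun x : ℝ => γ1 * (x ^ (γ1-1) * (1-x) ^ γ2) - γ2 * (x ^ γ1 * (1-x) ^ (γ2-1)))
        volume 0 1 := (hJA.const_mul γ1).sub (hJB.const_mul γ2)
    have h0 := intervalIntegral.integral_eq_sub_of_hasDerivAt_of_le zero_le_one hcF hderiv hint
    rw [intervalIntegral.integral_sub (hJA.const_mul γ1) (hJB.const_mul γ2),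
      intervalIntegral.integral_const_mul, intervalIntegral.integral_const_mul] at h0
    norm_num [Real.zero_rpow hγ1.ne', Real.zero_rpow hγ2.ne'] at h0
    linarith
  -- D > 0
  have hD : 0 < ∫ x in (0:ℝ)..1, x ^ (γ1-1) * (1-x) ^ (γ2-1) := by
    apply intervalIntegral.intervalIntegral_pos_of_pos_on hJD _ zero_lt_one
    intro x hx
    exact mul_pos (Real.rpow_pos_of_pos hx.1 _)
      (Real.rpow_pos_of_pos (by linarith [hx.2]) _)
  -- numerator of RHS
  have hNum : (∫ x in (0:ℝ)..1, Phi a1 b1 a2 b2 δ1 δ2 R01 R02 x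
        * (x ^ (γ1-1) * (1-x) ^ (γ2-1)))
      = δ2 * (∫ x in (0:ℝ)..1, (monod a1 b1 (Δ*x+R01) - δ1) * (x ^ (γ1-1) * (1-x) ^ γ2))
        + δ1 * (∫ x in (0:ℝ)..1, (monod a2 b2 (Δ*x+R01) - δ2) * (x ^ γ1 * (1-x) ^ (γ2-1))) := by
    have hcg : Set.EqOn
        (fun x => Phi a1 b1 a2 b2 δ1 δ2 R01 R02 x * (x ^ (γ1-1) * (1-x) ^ (γ2-1)))
        (fun x => δ2 * ((monod a1 b1 (Δ*x+R01) - δ1) * (x ^ (γ1-1) * (1-x) ^ γ2))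
          + δ1 * ((monod a2 b2 (Δ*x+R01) - δ2) * (x ^ γ1 * (1-x) ^ (γ2-1))))
        (Set.uIcc 0 1) := by
      rw [huIcc]; intro x hx
      have k1 := key1 x hx
      have k2 := key2 x hx
      simp only [Phi, ← hΔdef]
      linear_combination (δ2 * (monod a1 b1 (Δ*x+R01) - δ1) * x ^ (γ1-1)) * k2
        + (δ1 * (monod a2 b2 (Δ*x+R01) - δ2) * (1-x) ^ (γ2-1)) * k1
    rw [intervalIntegral.integral_congr hcg,
      intervalIntegral.integral_add (hI1.const_mul δ2) (hI2.const_mul δ1),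
      intervalIntegral.integral_const_mul, intervalIntegral.integral_const_mul]
  -- finish
  rw [hL1, hL2, hNum]
  have e1 : δ1 * γ1 = l1 := by rw [hγ1def]; field_simp
  have e2 : δ2 * γ2 = l2 := by rw [hγ2def]; field_simp
  have hA' : (γ1 + γ2) * (∫ x in (0:ℝ)..1, x ^ (γ1-1) * (1-x) ^ γ2)
      = γ2 * (∫ x in (0:ℝ)..1, x ^ (γ1-1) * (1-x) ^ (γ2-1)) := by
    linear_combination hFTC + γ2 * hAB
  have hB' : (γ1 + γ2) * (∫ x in (0:ℝ)..1, x ^ γ1 * (1-x) ^ (γ2-1))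
      = γ1 * (∫ x in (0:ℝ)..1, x ^ (γ1-1) * (1-x) ^ (γ2-1)) := by
    linear_combination (- hFTC) + γ1 * hAB
  exact final_algebra γ1 γ2 δ1 δ2 l1 l2 _ _ _ _ _ _
    hδ1.ne' hδ2.ne' (by positivity) hD.ne' e1 e2 hnorm2 hA' hB'
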